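/- For any integers r ≥ 2 and q ≥ 2 with r dividing q, there is no I-cycle for the arithmetic-progression index set I = {0, q^r/r, 2q^r/r, ..., (r-1)q^r/r} ⊆ Z_{q^r}. That is, AP(r, q^r/r) is q-invalid. -/

import Mathlib

/-- For `r ≥ 2`, `q ≥ 2` with `r ∣ q`, the set `AP(r, q^r / r)` is `q`-invalid:
there is no `I`-cycle for `I = {0, q^r/r, …, (r-1)·q^r/r} ⊆ ZMod (q^r)`. -/
theorem stmt_2 (q r : ℕ) (hq : 2 ≤ q) (hr : 2 ≤ r) (hdvd : r ∣ q) :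
    ¬ ∃ χ : ZMod (q ^ r) → Fin q, ∀ W : Fin r → Fin q, ∃ t : ZMod (q ^ r),
      ∀ j : Fin r, χ ((((j : ℕ) * (q ^ r / r) : ℕ) : ZMod (q ^ r)) + t) = W j := by
  rintro ⟨χ, hχ⟩
  have hq0 : q ≠ 0 := by omega
  have hpow_pos : 0 < q ^ r := Nat.pow_pos (by omega)
  set d := q ^ r / r with hd
  have hrdvd : r ∣ q ^ r := hdvd.trans (dvd_pow_self q (by omega))
  have hrd : r * d = q ^ r := Nat.mul_div_cancel' hrdvd
  have hd_pos : 0 < d := Nat.div_pos (le_trans (Nat.le_of_dvd (by omega) hdvd)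
    (Nat.le_self_pow (by omega) q)) (by omega)
  have hd_lt : d < q ^ r := Nat.div_lt_self hpow_pos (by omega)
  haveI : NeZero (q ^ r) := ⟨by omega⟩
  haveI : NeZero q := ⟨by omega⟩
  haveI : NeZero r := ⟨by omega⟩
  -- key modular lemma
  have hmod : ∀ a : ℕ, (((a % r) * d : ℕ) : ZMod (q ^ r)) = ((a * d : ℕ) : ZMod (q ^ r)) := by
    intro a
    have hnat : a * d = a % r * d + q ^ r * (a / r) := by
      conv_lhs => rw [← Nat.mod_add_div a r]
      rw [← hrd]; ring
    rw [hnat]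
    simp [ZMod.natCast_self]
  set f : ZMod (q ^ r) → (Fin r → Fin q) :=
    fun t j => χ ((((j : ℕ) * d : ℕ) : ZMod (q ^ r)) + t) with hf
  have hsurj : Function.Surjective f := by
    intro W
    obtain ⟨t, ht⟩ := hχ W
    exact ⟨t, funext fun j => ht j⟩
  have hbij : Function.Bijective f := by
    rw [Fintype.bijective_iff_surjective_and_card]
    refine ⟨hsurj, ?_⟩
    simp [ZMod.card, Fintype.card_fun]
  -- pick t with constant word
  obtain ⟨t, ht⟩ := hsurj (fun _ => (0 : Fin q))
  have hshift : f (t + (d : ZMod (q ^ r))) = f t := by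
    funext j
    have h1 : f (t + (d : ZMod (q ^ r))) j = f t (j + 1) := by
      simp only [hf]
      congr 1
      have hval : ((j + 1 : Fin r) : ℕ) = ((j : ℕ) + 1) % r := by
        simp [Fin.add_def, Fin.val_one', Nat.mod_eq_of_lt (show 1 < r by omega)]
      rw [hval, hmod]
      push_cast
      ring
    rw [h1, ht]
  have htt : t + (d : ZMod (q ^ r)) = t := hbij.injective hshift
  have hzero : (d : ZMod (q ^ r)) = 0 := by
    have := add_left_cancel (htt.trans (add_zero t).symm)
    exact this
  have hdvd2 : q ^ r ∣ d := (ZMod.natCast_eq_zero_iff d (q ^ r)).mp hzero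
  have := Nat.le_of_dvd hd_pos hdvd2
  omega
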